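/- Let H be a real inner product space, let u, v, v' ∈ H satisfy ⟨u − v', v' − v⟩ = 0, and let S, S' be nonnegative real numbers. Let ρ ∈ (0,1), L > 0, C > 0 and assume S'² ≤ ρ·S² + L·‖v' − v‖² and ‖u − v‖² ≤ C·S². Then ‖u − v'‖² + S'²/L ≤ ((C·L + ρ)/(C·L + 1)) · (‖u − v‖² + S²/L). -/

import Mathlib

open RealInnerProductSpace

theorem stmt_6 {H : Type*} [NormedAddCommGroup H] [InnerProductSpace ℝ H]
    (u v v' : H) (horth : ⟪u - v', v' - v⟫ = 0)
    (S S' : ℝ) (hS : 0 ≤ S) (hS' : 0 ≤ S')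
    (ρ : ℝ) (hρ : ρ ∈ Set.Ioo (0 : ℝ) 1) (L C : ℝ) (hL : 0 < L) (hC : 0 < C)
    (h1 : S' ^ 2 ≤ ρ * S ^ 2 + L * ‖v' - v‖ ^ 2)
    (h2 : ‖u - v‖ ^ 2 ≤ C * S ^ 2) :
    ‖u - v'‖ ^ 2 + S' ^ 2 / L ≤
      ((C * L + ρ) / (C * L + 1)) * (‖u - v‖ ^ 2 + S ^ 2 / L) := by
  obtain ⟨hρ0, hρ1⟩ := hρ
  have key : ‖u - v‖ ^ 2 = ‖u - v'‖ ^ 2 + ‖v' - v‖ ^ 2 := by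
    have h := norm_add_sq_real (u - v') (v' - v)
    rw [show u - v = (u - v') + (v' - v) by abel, h, horth]
    ring
  have hden : (0 : ℝ) < C * L + 1 := by positivity
  have goal' : (C * L + 1) * (L * ‖u - v'‖ ^ 2 + S' ^ 2) ≤
      (C * L + ρ) * (L * ‖u - v‖ ^ 2 + S ^ 2) := by
    have hA := mul_le_mul_of_nonneg_left h1 hden.le
    have h2' := h2
    rw [key] at h2'
    have hB := mul_le_mul_of_nonneg_left h2' (le_of_lt (mul_pos hL (by linarith : (0:ℝ) < 1 - ρ)))
    rw [key]
    nlinarith [hA, hB]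
  rw [show ‖u - v'‖ ^ 2 + S' ^ 2 / L = (L * ‖u - v'‖ ^ 2 + S' ^ 2) / L by field_simp,
    show ‖u - v‖ ^ 2 + S ^ 2 / L = (L * ‖u - v‖ ^ 2 + S ^ 2) / L by field_simp,
    div_mul_div_comm, div_le_div_iff₀ hL (by positivity)]
  nlinarith [mul_le_mul_of_nonneg_right goal' hL.le]
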